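/- Let γ > 1 and let S : (0,∞) → ℝ be C² with S'(Z) > 0 and (γ-1) S'(Z) + γ S''(Z) Z < 0 for all Z > 0. Then the determinant of the Hessian of h(ρ,p) = ρ S(p/ρ^γ) equals -((γ-1) S'(Z)/ρ^{2γ}) · (γ S''(Z) Z + (γ-1) S'(Z)), where Z = p/ρ^γ, and this determinant is strictly positive. -/

import Mathlib

open Real Set Filter

private lemma zfun_hasDerivAt (γ q r : ℝ) (hr : 0 < r) :
    HasDerivAt (fun r' : ℝ => q / r' ^ γ) (-γ * (q / r ^ γ) / r) r := by
  have h1 : HasDerivAt (fun x : ℝ => x ^ γ) (γ * r ^ (γ - 1)) r :=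
    Real.hasDerivAt_rpow_const (Or.inl hr.ne')
  have hA : (0:ℝ) < r ^ γ := Real.rpow_pos_of_pos hr γ
  have h2 := (h1.inv hA.ne').const_mul q
  have h3 : HasDerivAt (fun r' : ℝ => q / r' ^ γ)
      (q * (-(γ * r ^ (γ - 1)) / (r ^ γ) ^ 2)) r := by
    simpa [div_eq_mul_inv] using h2
  convert h3 using 1
  have hrs : r ^ (γ - 1) = r ^ γ / r := by
    rw [Real.rpow_sub hr, Real.rpow_one]
  rw [hrs]
  field_simp

theorem hessian_determinant (γ : ℝ) (hγ : 1 < γ) (S : ℝ → ℝ)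
    (hS : ContDiffOn ℝ 2 S (Set.Ioi (0 : ℝ)))
    (hS' : ∀ Z : ℝ, 0 < Z → 0 < deriv S Z)
    (hcond : ∀ Z : ℝ, 0 < Z → (γ - 1) * deriv S Z + γ * deriv (deriv S) Z * Z < 0)
    (h : ℝ → ℝ → ℝ) (hh : ∀ ρ p : ℝ, h ρ p = ρ * S (p / ρ ^ γ))
    (ρ p : ℝ) (hρ : 0 < ρ) (hp : 0 < p) :
    deriv (fun r => deriv (fun r' => h r' p) r) ρ *
          deriv (fun q => deriv (fun q' => h ρ q') q) p -
        (deriv (fun q => deriv (fun r => h r q) ρ) p) ^ 2 =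
      -((γ - 1) * deriv S (p / ρ ^ γ) / ρ ^ (2 * γ)) *
        (γ * deriv (deriv S) (p / ρ ^ γ) * (p / ρ ^ γ) + (γ - 1) * deriv S (p / ρ ^ γ)) ∧
    0 < deriv (fun r => deriv (fun r' => h r' p) r) ρ *
          deriv (fun q => deriv (fun q' => h ρ q') q) p -
        (deriv (fun q => deriv (fun r => h r q) ρ) p) ^ 2 := by
  -- basic differentiability facts for S and deriv S on (0,∞)
  have hSdiff : DifferentiableOn ℝ S (Set.Ioi (0:ℝ)) :=
    hS.differentiableOn (by norm_num)
  have hS1 : ContDiffOn ℝ 1 (deriv S) (Set.Ioi (0:ℝ)) :=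
    hS.deriv_of_isOpen isOpen_Ioi (by norm_num)
  have hS1diff : DifferentiableOn ℝ (deriv S) (Set.Ioi (0:ℝ)) :=
    hS1.differentiableOn (by norm_num)
  have hSat : ∀ z : ℝ, 0 < z → HasDerivAt S (deriv S z) z := fun z hz =>
    (((hSdiff z hz).differentiableAt (isOpen_Ioi.mem_nhds hz))).hasDerivAt
  have hS1at : ∀ z : ℝ, 0 < z → HasDerivAt (deriv S) (deriv (deriv S) z) z := fun z hz =>
    (((hS1diff z hz).differentiableAt (isOpen_Ioi.mem_nhds hz))).hasDerivAt
  -- first derivative in ρ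
  have key : ∀ q r : ℝ, 0 < q → 0 < r →
      HasDerivAt (fun r' => r' * S (q / r' ^ γ))
        (S (q / r ^ γ) - γ * ((q / r ^ γ) * deriv S (q / r ^ γ))) r := by
    intro q r hq hr
    have hZ : 0 < q / r ^ γ := div_pos hq (Real.rpow_pos_of_pos hr γ)
    have hZd := zfun_hasDerivAt γ q r hr
    have hSc : HasDerivAt (fun r' => S (q / r' ^ γ))
        (deriv S (q / r ^ γ) * (-γ * (q / r ^ γ) / r)) r :=
      (hSat _ hZ).comp r hZd
    have := (hasDerivAt_id' r).mul hSc
    refine this.congr_deriv ?_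
    field_simp
    ring
  have hfun1 : ∀ q : ℝ, (fun r' => h r' q) = fun r' => r' * S (q / r' ^ γ) :=
    fun q => funext fun r' => hh r' q
  have hd1 : ∀ q r : ℝ, 0 < q → 0 < r →
      deriv (fun r' => h r' q) r
        = S (q / r ^ γ) - γ * ((q / r ^ γ) * deriv S (q / r ^ γ)) := by
    intro q r hq hr
    rw [hfun1 q]
    exact (key q r hq hr).deriv
  set A : ℝ := ρ ^ γ with hAdef
  have hA : (0:ℝ) < A := Real.rpow_pos_of_pos hρ γ
  set Z : ℝ := p / A with hZdef
  have hZ : 0 < Z := div_pos hp hA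
  set a : ℝ := deriv S Z with hadef
  set b : ℝ := deriv (deriv S) Z with hbdef
  -- second derivative in ρ (∂ρρ)
  have hDρρ : deriv (fun r => deriv (fun r' => h r' p) r) ρ
      = a * (-γ * Z / ρ) - γ * ((-γ * Z / ρ) * a + Z * (b * (-γ * Z / ρ))) := by
    have hEv : (fun r => deriv (fun r' => h r' p) r)
        =ᶠ[nhds ρ] (fun r => S (p / r ^ γ) - γ * ((p / r ^ γ) * deriv S (p / r ^ γ))) := by
      filter_upwards [isOpen_Ioi.mem_nhds hρ] with r hr
      exact hd1 p r hp hr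
    rw [hEv.deriv_eq]
    have hZd := zfun_hasDerivAt γ p ρ hρ
    have hZp : 0 < p / ρ ^ γ := div_pos hp (Real.rpow_pos_of_pos hρ γ)
    have hSc : HasDerivAt (fun r => S (p / r ^ γ)) (a * (-γ * Z / ρ)) ρ := by
      have := (hSat _ hZp).comp ρ hZd
      simpa [Function.comp_def, hZdef, hAdef, hadef] using this
    have hS1c : HasDerivAt (fun r => deriv S (p / r ^ γ)) (b * (-γ * Z / ρ)) ρ := by
      have := (hS1at _ hZp).comp ρ hZd
      simpa [Function.comp_def, hZdef, hAdef, hbdef] using this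
    have hZd' : HasDerivAt (fun r : ℝ => p / r ^ γ) (-γ * Z / ρ) ρ := by
      simpa [hZdef, hAdef] using hZd
    have hprod := hZd'.mul hS1c
    have hfin := hSc.sub (hprod.const_mul γ)
    exact hfin.deriv
  -- second derivative in p (∂pp)
  have hlin : ∀ q : ℝ, HasDerivAt (fun q' : ℝ => q' / A) (1 / A) q := by
    intro q
    simpa using (hasDerivAt_id q).div_const A
  have hd1p : ∀ q : ℝ, 0 < q →
      deriv (fun q' => h ρ q') q = ρ * (deriv S (q / A) * (1 / A)) := by
    intro q hq
    have hfun : (fun q' => h ρ q') = fun q' => ρ * S (q' / A) :=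
      funext fun q' => hh ρ q'
    rw [hfun]
    have hZq : 0 < q / A := div_pos hq hA
    exact (((hSat _ hZq).comp q (hlin q)).const_mul ρ).deriv
  have hDpp : deriv (fun q => deriv (fun q' => h ρ q') q) p
      = ρ * (b * (1 / A) * (1 / A)) := by
    have hEv : (fun q => deriv (fun q' => h ρ q') q)
        =ᶠ[nhds p] (fun q => ρ * (deriv S (q / A) * (1 / A))) := by
      filter_upwards [isOpen_Ioi.mem_nhds hp] with q hq
      exact hd1p q hq
    rw [hEv.deriv_eq]
    have hS1c : HasDerivAt (fun q => deriv S (q / A)) (b * (1 / A)) p := by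
      have := (hS1at _ hZ).comp p (hlin p)
      simpa [Function.comp_def, hZdef, hbdef] using this
    exact ((hS1c.mul_const (1 / A)).const_mul ρ).deriv
  -- mixed derivative (∂ρp)
  have hDmix : deriv (fun q => deriv (fun r => h r q) ρ) p
      = a * (1 / A) - γ * ((1 / A) * a + Z * (b * (1 / A))) := by
    have hEv : (fun q => deriv (fun r => h r q) ρ)
        =ᶠ[nhds p] (fun q => S (q / A) - γ * ((q / A) * deriv S (q / A))) := by
      filter_upwards [isOpen_Ioi.mem_nhds hp] with q hq
      simpa [hAdef] using hd1 q ρ hq hρ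
    rw [hEv.deriv_eq]
    have hSc : HasDerivAt (fun q => S (q / A)) (a * (1 / A)) p := by
      have := (hSat _ hZ).comp p (hlin p)
      simpa [Function.comp_def, hZdef, hadef] using this
    have hS1c : HasDerivAt (fun q => deriv S (q / A)) (b * (1 / A)) p := by
      have := (hS1at _ hZ).comp p (hlin p)
      simpa [Function.comp_def, hZdef, hbdef] using this
    have hprod := (hlin p).mul hS1c
    have hfin := hSc.sub (hprod.const_mul γ)
    exact hfin.deriv
  -- the algebraic identity
  have hA2 : ρ ^ (2 * γ) = A ^ 2 := by
    rw [two_mul, Real.rpow_add hρ, hAdef, sq]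
  have hmain : deriv (fun r => deriv (fun r' => h r' p) r) ρ *
          deriv (fun q => deriv (fun q' => h ρ q') q) p -
        (deriv (fun q => deriv (fun r => h r q) ρ) p) ^ 2 =
      -((γ - 1) * a / ρ ^ (2 * γ)) * (γ * b * Z + (γ - 1) * a) := by
    rw [hDρρ, hDpp, hDmix, hA2]
    field_simp
    ring
  constructor
  · exact hmain
  · rw [hmain]
    have h1 : 0 < (γ - 1) * a := mul_pos (by linarith) (hS' Z hZ)
    have h2 : γ * b * Z + (γ - 1) * a < 0 := by
      have := hcond Z hZ
      linarith
    have h3 : (0:ℝ) < ρ ^ (2 * γ) := Real.rpow_pos_of_pos hρ _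
    have : -((γ - 1) * a / ρ ^ (2 * γ)) * (γ * b * Z + (γ - 1) * a)
        = ((γ - 1) * a / ρ ^ (2 * γ)) * (-(γ * b * Z + (γ - 1) * a)) := by ring
    rw [this]
    exact mul_pos (div_pos h1 h3) (by linarith)
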